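/- arXiv:2212.11552 — 3 statements merged into one kernel-verified Lean document; each statement's English description precedes it below -/
import Mathlib

section
/- Let f_a(v) = (ρS/2)‖v‖² c(α(v), β(v)) for v ∈ ℝ³, where α(v) = arctan(v₃/v₁) and β(v) = arcsin(v₂/‖v‖), and c : ℝ² → ℝ³ is differentiable with ∂c/∂β(α, 0) of the form (0, *, 0)ᵀ. Then at any point v with v₂ = 0, the Jacobian of f_a is ∂f_a/∂v = (ρS/2)(2c vᵀ + (∂c/∂α) vᵀ⌊e₂⌋ + ‖v‖ (∂c/∂β) e₂ᵀ), where c, ∂c/∂α, ∂c/∂β are evaluated at (α(v), 0). -/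
open Matrix Real

noncomputable def norm3 (v : Fin 3 → ℝ) : ℝ := Real.sqrt (v ⬝ᵥ v)

def e2 : Fin 3 → ℝ := ![0, 1, 0]

noncomputable def P3 (i : Fin 3) : (Fin 3 → ℝ) →L[ℝ] ℝ := ContinuousLinearMap.proj i

lemma hP3 (i : Fin 3) (u : Fin 3 → ℝ) : HasFDerivAt (fun y : Fin 3 → ℝ => y i) (P3 i) u :=
  (P3 i).hasFDerivAt

lemma dot_self_nonneg3 (u : Fin 3 → ℝ) : 0 ≤ u ⬝ᵥ u :=
  Finset.sum_nonneg fun i _ => mul_self_nonneg (u i)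

lemma hdot3 (u : Fin 3 → ℝ) : HasFDerivAt (fun y : Fin 3 → ℝ => y ⬝ᵥ y)
    (∑ i : Fin 3, (u i • P3 i + u i • P3 i)) u :=
  HasFDerivAt.sum (u := (Finset.univ : Finset (Fin 3)))
    (A := fun i (y : Fin 3 → ℝ) => y i * y i) (x := u)
    (fun i _ => (hP3 i u).mul (hP3 i u))

set_option maxHeartbeats 1000000 in
/-- Theorem 1 of the paper: Jacobian of the aerodynamic force
`f_a(v) = (ρS/2)‖v‖² c(α(v), β(v))` at a point with zero sideslip, for a
symmetric airframe (`∂c/∂β(α,0)` has vanishing first and third components):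
`∂f_a/∂v = (ρS/2)(2 c vᵀ + (∂c/∂α) vᵀ⌊e₂⌋ + ‖v‖ (∂c/∂β) e₂ᵀ)`. -/
theorem jacobian_aero_force (ρ S : ℝ) (hρ : 0 < ρ) (hS : 0 < S)
    (c : ℝ × ℝ → (Fin 3 → ℝ)) (hc : Differentiable ℝ c)
    (v : Fin 3 → ℝ) (hvx : v 0 ≠ 0) (hvy : v 1 = 0)
    (hsym0 : fderiv ℝ c (Real.arctan (v 2 / v 0), 0) (0, 1) 0 = 0)
    (hsym2 : fderiv ℝ c (Real.arctan (v 2 / v 0), 0) (0, 1) 2 = 0) :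
    ∀ w : Fin 3 → ℝ,
      fderiv ℝ
        (fun u : Fin 3 → ℝ =>
          (ρ * S / 2 * (norm3 u) ^ 2) •
            c (Real.arctan (u 2 / u 0), Real.arcsin (u 1 / norm3 u))) v w
      = (ρ * S / 2) •
          ((2 * (v ⬝ᵥ w)) • c (Real.arctan (v 2 / v 0), 0)
            + (v ⬝ᵥ (crossProduct e2 w)) • fderiv ℝ c (Real.arctan (v 2 / v 0), 0) (1, 0)
            + (norm3 v * w 1) • fderiv ℝ c (Real.arctan (v 2 / v 0), 0) (0, 1)) := by
  intro w
  have hq : (0:ℝ) < v ⬝ᵥ v := by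
    have h1 : v ⬝ᵥ v = v 0 * v 0 + (v 1 * v 1 + v 2 * v 2) := by
      simp [dotProduct, Fin.sum_univ_three]; ring
    nlinarith [mul_self_pos.mpr hvx, mul_self_nonneg (v 1), mul_self_nonneg (v 2)]
  have hn : 0 < Real.sqrt (v ⬝ᵥ v) := Real.sqrt_pos.mpr hq
  -- pieces
  have hinv0 := (hasDerivAt_inv hvx).comp_hasFDerivAt v (hP3 0 v)
  have hdiv1 := (hP3 2 v).mul hinv0
  have hArctan := (Real.hasDerivAt_arctan (v 2 * (v 0)⁻¹)).comp_hasFDerivAt v hdiv1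
  have hsqrt := HasDerivAt.comp_hasFDerivAt (f := fun y : Fin 3 → ℝ => y ⬝ᵥ y) v (Real.hasDerivAt_sqrt hq.ne') (hdot3 v)
  have hinvn := (hasDerivAt_inv hn.ne').comp_hasFDerivAt v hsqrt
  have hdiv2 := (hP3 1 v).mul hinvn
  have harg : v 1 * (Real.sqrt (v ⬝ᵥ v))⁻¹ = 0 := by rw [hvy, zero_mul]
  have harcsin0 : HasDerivAt Real.arcsin
      (1 / Real.sqrt (1 - (v 1 * (Real.sqrt (v ⬝ᵥ v))⁻¹) ^ 2)) (v 1 * (Real.sqrt (v ⬝ᵥ v))⁻¹) := by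
    rw [harg]
    exact Real.hasDerivAt_arcsin (by norm_num) (by norm_num)
  have hArcsin := harcsin0.comp_hasFDerivAt v hdiv2
  have hg := hArctan.prodMk hArcsin
  have hgv : (Real.arctan (v 2 * (v 0)⁻¹), Real.arcsin (v 1 * (Real.sqrt (v ⬝ᵥ v))⁻¹))
      = (Real.arctan (v 2 / v 0), (0:ℝ)) := by
    rw [harg, Real.arcsin_zero, div_eq_mul_inv]
  have hcd : HasFDerivAt c (fderiv ℝ c (Real.arctan (v 2 / v 0), 0))
      (Real.arctan (v 2 * (v 0)⁻¹), Real.arcsin (v 1 * (Real.sqrt (v ⬝ᵥ v))⁻¹)) := by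
    rw [hgv]; exact (hc _).hasFDerivAt
  have hcomp := hcd.comp v hg
  have hs := (hdot3 v).const_mul (ρ * S / 2)
  have htot := hs.smul hcomp
  have hfd : fderiv ℝ
      (fun u : Fin 3 → ℝ => (ρ * S / 2 * (u ⬝ᵥ u)) •
        c (Real.arctan (u 2 * (u 0)⁻¹), Real.arcsin (u 1 * (Real.sqrt (u ⬝ᵥ u))⁻¹))) v
      = (ρ * S / 2 * (v ⬝ᵥ v)) •
          (fderiv ℝ c (Real.arctan (v 2 / v 0), 0)).comp
            (((1 / (1 + (v 2 * (v 0)⁻¹) ^ 2)) •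
                (v 2 • -(v 0 ^ 2)⁻¹ • P3 0 + (v 0)⁻¹ • P3 2)).prod
              ((1 / Real.sqrt (1 - (v 1 * (Real.sqrt (v ⬝ᵥ v))⁻¹) ^ 2)) •
                (v 1 • -(Real.sqrt (v ⬝ᵥ v) ^ 2)⁻¹ •
                    (1 / (2 * Real.sqrt (v ⬝ᵥ v))) • ∑ i : Fin 3, (v i • P3 i + v i • P3 i) +
                  (Real.sqrt (v ⬝ᵥ v))⁻¹ • P3 1)))
        + ((ρ * S / 2) • ∑ i : Fin 3, (v i • P3 i + v i • P3 i)).smulRight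
            (c (Real.arctan (v 2 * (v 0)⁻¹), Real.arcsin (v 1 * (Real.sqrt (v ⬝ᵥ v))⁻¹))) :=
    htot.fderiv
  have hfun : (fun u : Fin 3 → ℝ =>
          (ρ * S / 2 * (norm3 u) ^ 2) •
            c (Real.arctan (u 2 / u 0), Real.arcsin (u 1 / norm3 u)))
      = (fun u : Fin 3 → ℝ => (ρ * S / 2 * (u ⬝ᵥ u)) •
          c (Real.arctan (u 2 * (u 0)⁻¹), Real.arcsin (u 1 * (Real.sqrt (u ⬝ᵥ u))⁻¹))) := by
    funext u
    simp only [norm3, div_eq_mul_inv]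
    rw [Real.sq_sqrt (dot_self_nonneg3 u)]
  rw [hfun, hfd, hgv]
  have hDc : ∀ a b : ℝ, fderiv ℝ c (Real.arctan (v 2 / v 0), 0) (a, b)
      = a • fderiv ℝ c (Real.arctan (v 2 / v 0), 0) (1, 0)
        + b • fderiv ℝ c (Real.arctan (v 2 / v 0), 0) (0, 1) := by
    intro a b
    have h : ((a, b) : ℝ × ℝ) = a • ((1:ℝ), (0:ℝ)) + b • ((0:ℝ), (1:ℝ)) := by
      simp [Prod.ext_iff]
    rw [h, ContinuousLinearMap.map_add, ContinuousLinearMap.map_smul, ContinuousLinearMap.map_smul]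
  simp only [ContinuousLinearMap.add_apply, ContinuousLinearMap.coe_smul', Pi.smul_apply,
    ContinuousLinearMap.coe_comp', Function.comp_apply, ContinuousLinearMap.prod_apply,
    ContinuousLinearMap.smulRight_apply, ContinuousLinearMap.coe_sum', Finset.sum_apply,
    P3, ContinuousLinearMap.proj_apply, Fin.sum_univ_three, hvy, zero_mul, mul_zero,
    zero_smul, smul_zero, add_zero, zero_add, ne_eq, OfNat.ofNat_ne_zero,
    not_false_eq_true, zero_pow, sub_zero, Real.sqrt_one, one_smul, ContinuousLinearMap.neg_apply]
  rw [hDc]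
  have hs2 : Real.sqrt (v ⬝ᵥ v) ^ 2 = v ⬝ᵥ v := Real.sq_sqrt hq.le
  have hqe : v ⬝ᵥ v = v 0 * v 0 + v 2 * v 2 := by
    simp [dotProduct, Fin.sum_univ_three, hvy]
  have hvw : v ⬝ᵥ w = v 0 * w 0 + v 2 * w 2 := by
    simp [dotProduct, Fin.sum_univ_three, hvy]
  have hcross : v ⬝ᵥ (crossProduct e2 w) = v 0 * w 2 - v 2 * w 0 := by
    simp [dotProduct, crossProduct, e2, Fin.sum_univ_three, hvy]
    ring
  rw [norm3, hvw, hcross]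
  clear hinv0 hdiv1 hArctan hsqrt hinvn hdiv2 hArcsin hg hcomp hs htot hfd hfun hcd harcsin0 hgv harg hDc
  rw [show v ⬝ᵥ v = v 0 ^ 2 + v 2 ^ 2 from by
    simp [dotProduct, Fin.sum_univ_three, hvy]; ring]
  have h2 : Real.sqrt (v 0 ^ 2 + v 2 ^ 2) ^ 2 = v 0 ^ 2 + v 2 ^ 2 := Real.sq_sqrt (by positivity)
  have hne : Real.sqrt (v 0 ^ 2 + v 2 ^ 2) ≠ 0 := ne_of_gt (Real.sqrt_pos.mpr (by positivity))
  simp only [smul_eq_mul]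
  match_scalars
  · field_simp
    ring
  · field_simp
    linear_combination (-w 1) * h2
  · ring
end

section
/- Let N be the 4×4 block matrix N = [[0, v_aᵀR⌊e₂⌋], [Re₁, R·Ψ]] where R ∈ SO(3), v_a ∈ ℝ³, and Ψ = -⌊a_T e₁ + f_a/m⌋ + (1/m)(∂f_a/∂v_aᴮ)⌊v_aᴮ⌋ has the sparsity pattern Ψ = [[0, ψ₁₂, 0], [ψ₂₁, 0, ψ₂₃], [0, ψ₃₂, 0]], with v_aᴮ = Rᵀv_a = (‖v_a‖cos α, 0, ‖v_a‖sin α)ᵀ. Then det(N) = -ψ₃₂(v_az^B ψ₂₃ + v_ax^B ψ₂₁). -/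
open Matrix Real

def skew (a : Fin 3 → ℝ) : Matrix (Fin 3) (Fin 3) ℝ :=
  !![0, -a 2, a 1; a 2, 0, -a 0; -a 1, a 0, 0]

def e1 : Fin 3 → ℝ := ![1, 0, 0]
/-- determinant of the flatness linear-system matrix
`N = [[0, v_aᵀR⌊e₂⌋], [Re₁, RΨ]]` with sparse `Ψ` and
`v_aᴮ = Rᵀv_a = (‖v_a‖cos α, 0, ‖v_a‖sin α)ᵀ`:
`det N = -ψ₃₂ (v_az^B ψ₂₃ + v_ax^B ψ₂₁)`. -/
theorem det_N_block (R : Matrix (Fin 3) (Fin 3) ℝ)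
    (hR : Rᵀ * R = 1) (hRdet : R.det = 1)
    (va : Fin 3 → ℝ) (α ψ12 ψ21 ψ23 ψ32 : ℝ)
    (Ψ : Matrix (Fin 3) (Fin 3) ℝ)
    (hΨ : Ψ = !![0, ψ12, 0; ψ21, 0, ψ23; 0, ψ32, 0])
    (hvaB : Rᵀ *ᵥ va = ![norm3 va * Real.cos α, 0, norm3 va * Real.sin α])
    (N : Matrix (Fin 1 ⊕ Fin 3) (Fin 1 ⊕ Fin 3) ℝ)
    (hN : N = Matrix.fromBlocks 0
      (Matrix.of fun _ j => (va ᵥ* (R * skew e2)) j)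
      (Matrix.of fun i _ => (R *ᵥ e1) i)
      (R * Ψ)) :
    N.det = -ψ32 * (norm3 va * Real.sin α * ψ23 + norm3 va * Real.cos α * ψ21) := by
  set c := norm3 va * Real.cos α with hc
  set s := norm3 va * Real.sin α with hs
  have hskew : skew e2 = !![0, 0, 1; 0, 0, 0; -1, 0, 0] := by
    ext i j
    fin_cases i <;> fin_cases j <;> simp [skew, e2]
  have hrow : va ᵥ* (R * skew e2) = ![-s, 0, c] := by
    rw [← Matrix.vecMul_vecMul]
    have h1 : va ᵥ* R = ![c, 0, s] := by
      rw [← Matrix.mulVec_transpose, hvaB]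
    rw [h1, hskew]
    ext i
    fin_cases i <;>
      simp [Matrix.vecMul, dotProduct, Fin.sum_univ_three,
        Matrix.vecHead, Matrix.vecTail]
  have hcol : Rᵀ * (Matrix.of fun i (_ : Fin 1) => (R *ᵥ e1) i)
      = Matrix.of fun i _ => e1 i := by
    ext i j
    have : (Rᵀ * Matrix.of fun i (_ : Fin 1) => (R *ᵥ e1) i) i j
        = (Rᵀ *ᵥ (R *ᵥ e1)) i := by
      simp [Matrix.mul_apply, Matrix.mulVec, dotProduct]
    rw [this, Matrix.mulVec_mulVec, hR, Matrix.one_mulVec]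
    rfl
  have hΨ' : Rᵀ * (R * Ψ) = Ψ := by rw [← Matrix.mul_assoc, hR, Matrix.one_mul]
  have hP : (Matrix.fromBlocks (1 : Matrix (Fin 1) (Fin 1) ℝ) 0 0 Rᵀ) * N
      = Matrix.fromBlocks 0 (Matrix.of fun _ j => (va ᵥ* (R * skew e2)) j)
          (Matrix.of fun i _ => e1 i) Ψ := by
    rw [hN, Matrix.fromBlocks_multiply]
    simp [hcol, hΨ']
  have hdetP : ((Matrix.fromBlocks (1 : Matrix (Fin 1) (Fin 1) ℝ) 0 0 Rᵀ)).det = 1 := by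
    rw [Matrix.det_fromBlocks_zero₂₁]
    simp [Matrix.det_transpose, hRdet]
  have hNdet : N.det = (Matrix.fromBlocks (0 : Matrix (Fin 1) (Fin 1) ℝ)
          (Matrix.of fun (_ : Fin 1) j => (va ᵥ* (R * skew e2)) j)
          (Matrix.of fun i (_ : Fin 1) => e1 i) Ψ).det := by
    rw [← hP, Matrix.det_mul, hdetP, one_mul]
  rw [hNdet, hrow, hΨ]
  rw [← Matrix.det_submatrix_equiv_self finSumFinEquiv.symm]
  have : (Matrix.fromBlocks 0 (Matrix.of fun (_ : Fin 1) j => (![-s,0,c] : Fin 3 → ℝ) j)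
          (Matrix.of fun i (_ : Fin 1) => e1 i)
          (!![0, ψ12, 0; ψ21, 0, ψ23; 0, ψ32, 0])).submatrix
        finSumFinEquiv.symm finSumFinEquiv.symm
      = !![0, -s, 0, c; 1, 0, ψ12, 0; 0, ψ21, 0, ψ23; 0, 0, ψ32, 0] := by
    ext i j
    fin_cases i <;> fin_cases j <;> rfl
  rw [this]
  have h1 : Fin.succAbove (1 : Fin 4) 2 = 3 := rfl
  have h2 : Fin.castSucc (2 : Fin 3) = (2 : Fin 4) := rfl
  have h3 : Fin.succAbove (3 : Fin 4) 2 = 2 := rfl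
  simp [Matrix.det_succ_row_zero, Fin.sum_univ_succ, Matrix.det_fin_three, h1, h2, h3]
  ring
end

section
/- Combining the previous results: under the symmetric-airframe aerodynamic assumptions, the determinant of the flatness linear-system matrix N satisfies det(N) = -(ρSV²/(2m)) · (∂F/∂α) · ‖v_a × (v̇ - g)‖, where F(α) = h sin(γ - α) + c_z(α, 0) with h = 2m‖v̇ - g‖/(ρV²S). Hence N is invertible if and only if ∂F/∂α ≠ 0 and v_a × (v̇ - g) ≠ 0. -/
open Matrix Real

lemma norm3_eq_zero_iff (v : Fin 3 → ℝ) : norm3 v = 0 ↔ v = 0 := by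
  unfold norm3
  rw [Real.sqrt_eq_zero']
  constructor
  · intro hle
    have h0 : v 0 * v 0 + v 1 * v 1 + v 2 * v 2 ≤ 0 := by
      simpa [dotProduct, Fin.sum_univ_three] using hle
    funext i
    fin_cases i <;> [skip; skip; skip] <;> simp <;> nlinarith [sq_nonneg (v 0), sq_nonneg (v 1), sq_nonneg (v 2)]
  · intro hv
    simp [hv]

/-- Theorem 2 of the paper: under the symmetric-airframe
aerodynamic assumptions, the flatness linear-system matrix satisfies
`det N = -(ρSV²/(2m)) (∂F/∂α) ‖v_a × (v̇ - g)‖` where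
`F(α) = h sin(γ-α) + c_z(α,0)`, `h = 2m‖v̇-g‖/(ρV²S)`; hence `N` is invertible
iff `∂F/∂α ≠ 0` and `v_a × (v̇ - g) ≠ 0`. -/
theorem det_N_flatness (m ρ S V α γ cyβ : ℝ)
    (hm : 0 < m) (hρ : 0 < ρ) (hS : 0 < S) (hV : 0 < V)
    (va u : Fin 3 → ℝ) (hVva : V = norm3 va)
    (hcross : norm3 (va ⨯₃ u) = V * norm3 u * Real.sin γ)
    (cz : ℝ → ℝ) (hcz : DifferentiableAt ℝ cz α)
    (h : ℝ) (hh : h = 2 * m * norm3 u / (ρ * V ^ 2 * S))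
    (F : ℝ → ℝ) (hF : F = fun a => h * Real.sin (γ - a) + cz a)
    (ψ12 ψ21 ψ23 ψ32 : ℝ)
    (h21 : ψ21 = norm3 u * Real.sin (γ - α) + ρ * S * V ^ 2 / (2 * m) * cyβ * Real.sin α)
    (h23 : ψ23 = norm3 u * Real.cos (γ - α) - ρ * S * V ^ 2 / (2 * m) * cyβ * Real.cos α)
    (h32 : ψ32 = -norm3 u * Real.cos (γ - α) + ρ * S * V ^ 2 / (2 * m) * deriv cz α)
    (Ψ : Matrix (Fin 3) (Fin 3) ℝ)
    (hΨ : Ψ = !![0, ψ12, 0; ψ21, 0, ψ23; 0, ψ32, 0])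
    (R : Matrix (Fin 3) (Fin 3) ℝ) (hR : Rᵀ * R = 1) (hRdet : R.det = 1)
    (hvaB : Rᵀ *ᵥ va = ![V * Real.cos α, 0, V * Real.sin α])
    (N : Matrix (Fin 1 ⊕ Fin 3) (Fin 1 ⊕ Fin 3) ℝ)
    (hN : N = Matrix.fromBlocks 0
      (Matrix.of fun _ j => (va ᵥ* (R * skew e2)) j)
      (Matrix.of fun i _ => (R *ᵥ e1) i)
      (R * Ψ)) :
    N.det = -(ρ * S * V ^ 2 / (2 * m)) * deriv F α * norm3 (va ⨯₃ u) ∧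
      (N.det ≠ 0 ↔ deriv F α ≠ 0 ∧ va ⨯₃ u ≠ 0) := by
  -- the row vector vᵃᴮᵀ ⌊e₂⌋
  have hrow : va ᵥ* (R * skew e2) = ![-(V * Real.sin α), 0, V * Real.cos α] := by
    rw [← Matrix.vecMul_vecMul]
    have hva : va ᵥ* R = ![V * Real.cos α, 0, V * Real.sin α] := by
      rw [← hvaB, ← Matrix.mulVec_transpose]
    rw [hva]
    funext j
    fin_cases j <;>
      simp [Matrix.vecMul, skew, e2, dotProduct, Fin.sum_univ_three,
        Matrix.vecHead, Matrix.vecTail]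
  -- factor N as a block-diagonal times an explicit matrix
  set M : Matrix (Fin 1 ⊕ Fin 3) (Fin 1 ⊕ Fin 3) ℝ :=
    Matrix.fromBlocks 0
      (Matrix.of fun _ j => (![-(V * Real.sin α), 0, V * Real.cos α] : Fin 3 → ℝ) j)
      (Matrix.of fun i (_ : Fin 1) => e1 i) Ψ with hM
  have hcol : (Matrix.of fun i (_ : Fin 1) => (R *ᵥ e1) i) =
      R * Matrix.of (fun i (_ : Fin 1) => e1 i) := by
    funext i j
    simp [Matrix.mul_apply, Matrix.mulVec, dotProduct]
  have hfac : N = Matrix.fromBlocks (1 : Matrix (Fin 1) (Fin 1) ℝ) 0 0 R * M := by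
    rw [hN, hM, Matrix.fromBlocks_multiply]
    simp only [Matrix.one_mul, Matrix.zero_mul, Matrix.mul_zero, add_zero, zero_add]
    simp only [hrow]
    rw [hcol]
  -- determinant of the explicit factor
  have hMdet : M.det = -V * ψ32 * (Real.sin α * ψ23 + Real.cos α * ψ21) := by
    have e4 : Fin 4 ≃ Fin 1 ⊕ Fin 3 := (finSumFinEquiv (m := 1) (n := 3)).symm
    have hds := Matrix.det_submatrix_equiv_self
      ((finSumFinEquiv (m := 1) (n := 3)).symm) M
    rw [← hds]
    have s0 : (finSumFinEquiv (m := 1) (n := 3)).symm 0 = Sum.inl 0 := by decide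
    have s1 : (finSumFinEquiv (m := 1) (n := 3)).symm 1 = Sum.inr 0 := by decide
    have s2 : (finSumFinEquiv (m := 1) (n := 3)).symm 2 = Sum.inr 1 := by decide
    have s3 : (finSumFinEquiv (m := 1) (n := 3)).symm 3 = Sum.inr 2 := by decide
    have hsub : M.submatrix (finSumFinEquiv (m := 1) (n := 3)).symm
        (finSumFinEquiv (m := 1) (n := 3)).symm =
        !![0, -(V * Real.sin α), 0, V * Real.cos α;
           1, 0, ψ12, 0;
           0, ψ21, 0, ψ23;
           0, 0, ψ32, 0] := by
      funext i j
      fin_cases i <;> fin_cases j <;>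
        simp [hM, hΨ, Matrix.fromBlocks, e1, s0, s1, s2, s3, Matrix.vecHead, Matrix.vecTail]
    rw [hsub]
    simp [Matrix.det_succ_row_zero, Fin.sum_univ_succ, Matrix.det_fin_three,
      Fin.succAbove, Matrix.vecHead, Matrix.vecTail,
      Fin.castSucc, Fin.castAdd, Fin.castLE]
    ring
  -- the trig identity
  have trig := Real.sin_add α (γ - α)
  rw [show α + (γ - α) = γ by ring] at trig
  -- the derivative of F
  have hderivs : HasDerivAt (fun a => Real.sin (γ - a)) (-Real.cos (γ - α)) α := by
    have h1 : HasDerivAt (fun a : ℝ => γ - a) (-1) α := by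
      exact (hasDerivAt_id α).const_sub γ
    have h2 := (Real.hasDerivAt_sin (γ - α)).comp α h1; rw [mul_neg_one] at h2; exact h2
  have hdF : deriv F α = h * (-Real.cos (γ - α)) + deriv cz α := by
    rw [hF]
    exact ((hderivs.const_mul h).add hcz.hasDerivAt).deriv
  have hVne : V ≠ 0 := ne_of_gt hV
  have hmne : m ≠ 0 := ne_of_gt hm
  have hρne : ρ ≠ 0 := ne_of_gt hρ
  have hSne : S ≠ 0 := ne_of_gt hS
  have hkh : ρ * S * V ^ 2 / (2 * m) * h = norm3 u := by
    rw [hh]; field_simp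
  -- the determinant formula
  have hdet : N.det = -(ρ * S * V ^ 2 / (2 * m)) * deriv F α * norm3 (va ⨯₃ u) := by
    rw [hfac, Matrix.det_mul, Matrix.det_fromBlocks_zero₂₁, Matrix.det_one, hRdet,
      one_mul, one_mul, hMdet, hdF, hcross, h21, h23, h32]
    linear_combination
      (V * norm3 u * (-norm3 u * Real.cos (γ - α) + ρ * S * V ^ 2 / (2 * m) * deriv cz α)) * trig
      + (-(V * norm3 u * Real.sin γ * Real.cos (γ - α))) * hkh
  refine ⟨hdet, ?_⟩
  rw [hdet]
  have hk : ρ * S * V ^ 2 / (2 * m) ≠ 0 := by positivity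
  simp only [ne_eq, mul_eq_zero, neg_eq_zero, norm3_eq_zero_iff, not_or] at hk ⊢
  tauto
end
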